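/- Let (C, Δ_C) be a coassociative coalgebra, (M) a C-comodule via δ : M → C ⊗ M, α_C : C → C a coalgebra endomorphism and α_M : M → M a linear map with δ ∘ α_M = (α_C ⊗ α_M) ∘ δ. Then δ_α = (α_C ⊗ α_M) ∘ δ is a comodule structure map for the Hom-coassociative coalgebra C_α = (C, Δ_C ∘ α_C, α_C) on the Hom-module (M, α_M): δ_α ∘ α_M = (α_C ⊗ α_M) ∘ δ_α and (α_C ⊗ δ_α) ∘ δ_α = ((Δ_C ∘ α_C) ⊗ α_M) ∘ δ_α. -/

import Mathlib

open TensorProduct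

/-- Deforming a comodule over a coassociative coalgebra along compatible
endomorphisms yields a comodule over the deformed Hom-coassociative coalgebra. -/
theorem stmt_8 {F : Type*} [Field F] {C M : Type*}
    [AddCommGroup C] [Module F C] [AddCommGroup M] [Module F M]
    (ΔC : C →ₗ[F] C ⊗[F] C) (δ : M →ₗ[F] C ⊗[F] M)
    (αC : C →ₗ[F] C) (αM : M →ₗ[F] M)
    -- C is a coassociative coalgebra
    (hcoassoc : LinearMap.lTensor C ΔC ∘ₗ ΔC =
      (TensorProduct.assoc F C C C).toLinearMap ∘ₗ LinearMap.rTensor C ΔC ∘ₗ ΔC)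
    -- δ is a (classical) C-comodule structure on M
    (hδ : LinearMap.lTensor C δ ∘ₗ δ =
      (TensorProduct.assoc F C C M).toLinearMap ∘ₗ LinearMap.rTensor M ΔC ∘ₗ δ)
    -- α_C is a coalgebra endomorphism
    (hαC : ΔC ∘ₗ αC = TensorProduct.map αC αC ∘ₗ ΔC)
    -- compatibility δ ∘ α_M = (α_C ⊗ α_M) ∘ δ
    (hcomp : δ ∘ₗ αM = TensorProduct.map αC αM ∘ₗ δ) :
    -- δ_α = (α_C ⊗ α_M) ∘ δ is a comodule structure for C_α on (M, α_M)
    (TensorProduct.map αC αM ∘ₗ δ) ∘ₗ αM =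
      TensorProduct.map αC αM ∘ₗ (TensorProduct.map αC αM ∘ₗ δ) ∧
    TensorProduct.map αC (TensorProduct.map αC αM ∘ₗ δ) ∘ₗ
        (TensorProduct.map αC αM ∘ₗ δ) =
      (TensorProduct.assoc F C C M).toLinearMap ∘ₗ
        TensorProduct.map (ΔC ∘ₗ αC) αM ∘ₗ (TensorProduct.map αC αM ∘ₗ δ) := by
  constructor
  · rw [LinearMap.comp_assoc, hcomp]
  · have key : TensorProduct.map αC (TensorProduct.map αC αM ∘ₗ δ) ∘ₗ
        TensorProduct.map αC αM =
        TensorProduct.map (αC ∘ₗ αC) (TensorProduct.map αC αM ∘ₗ TensorProduct.map αC αM)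
          ∘ₗ LinearMap.lTensor C δ := by
      rw [← TensorProduct.map_comp]
      ext c m
      simp only [LinearMap.coe_comp, Function.comp_apply, TensorProduct.map_tmul,
        LinearMap.lTensor_tmul, AlgebraTensorModule.curry_apply, TensorProduct.curry_apply,
        LinearMap.coe_restrictScalars]
      rw [show δ (αM m) = TensorProduct.map αC αM (δ m) from LinearMap.congr_fun hcomp m]
    calc TensorProduct.map αC (TensorProduct.map αC αM ∘ₗ δ) ∘ₗ
        (TensorProduct.map αC αM ∘ₗ δ)
        = (TensorProduct.map αC (TensorProduct.map αC αM ∘ₗ δ) ∘ₗ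
            TensorProduct.map αC αM) ∘ₗ δ := by rw [LinearMap.comp_assoc]
      _ = TensorProduct.map (αC ∘ₗ αC)
            (TensorProduct.map αC αM ∘ₗ TensorProduct.map αC αM) ∘ₗ
            (LinearMap.lTensor C δ ∘ₗ δ) := by rw [key, LinearMap.comp_assoc]
      _ = TensorProduct.map (αC ∘ₗ αC)
            (TensorProduct.map αC αM ∘ₗ TensorProduct.map αC αM) ∘ₗ
            (TensorProduct.assoc F C C M).toLinearMap ∘ₗ LinearMap.rTensor M ΔC ∘ₗ δ := by
              rw [hδ]
      _ = ((TensorProduct.map (αC ∘ₗ αC)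
            (TensorProduct.map (αC ∘ₗ αC) (αM ∘ₗ αM))) ∘ₗ
            (TensorProduct.assoc F C C M).toLinearMap) ∘ₗ LinearMap.rTensor M ΔC ∘ₗ δ := by
              rw [TensorProduct.map_comp αC αM αC αM, LinearMap.comp_assoc]
      _ = ((TensorProduct.assoc F C C M).toLinearMap ∘ₗ
            TensorProduct.map (TensorProduct.map (αC ∘ₗ αC) (αC ∘ₗ αC)) (αM ∘ₗ αM)) ∘ₗ
            LinearMap.rTensor M ΔC ∘ₗ δ := by
              rw [TensorProduct.map_map_comp_assoc_eq]
      _ = (TensorProduct.assoc F C C M).toLinearMap ∘ₗ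
            TensorProduct.map (ΔC ∘ₗ αC ∘ₗ αC) (αM ∘ₗ αM) ∘ₗ δ := by
              have h2 : TensorProduct.map (αC ∘ₗ αC) (αC ∘ₗ αC) ∘ₗ ΔC =
                  ΔC ∘ₗ αC ∘ₗ αC := by
                rw [TensorProduct.map_comp, LinearMap.comp_assoc, ← hαC,
                  ← LinearMap.comp_assoc, ← hαC, LinearMap.comp_assoc]
              have h3 : TensorProduct.map (TensorProduct.map (αC ∘ₗ αC) (αC ∘ₗ αC))
                  (αM ∘ₗ αM) ∘ₗ LinearMap.rTensor M ΔC =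
                  TensorProduct.map (ΔC ∘ₗ αC ∘ₗ αC) (αM ∘ₗ αM) := by
                ext c m
                simp only [LinearMap.coe_comp, Function.comp_apply, TensorProduct.map_tmul,
                  LinearMap.rTensor_tmul, AlgebraTensorModule.curry_apply,
                  TensorProduct.curry_apply, LinearMap.coe_restrictScalars]
                rw [show TensorProduct.map (αC ∘ₗ αC) (αC ∘ₗ αC) (ΔC c) =
                  ΔC (αC (αC c)) from LinearMap.congr_fun h2 c]
              rw [LinearMap.comp_assoc (LinearMap.rTensor M ΔC ∘ₗ δ),
                ← LinearMap.comp_assoc δ (LinearMap.rTensor M ΔC)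
                (TensorProduct.map (TensorProduct.map (αC ∘ₗ αC) (αC ∘ₗ αC)) (αM ∘ₗ αM)),
                h3]
      _ = (TensorProduct.assoc F C C M).toLinearMap ∘ₗ
            TensorProduct.map (ΔC ∘ₗ αC) αM ∘ₗ (TensorProduct.map αC αM ∘ₗ δ) := by
              rw [← LinearMap.comp_assoc δ (TensorProduct.map αC αM)
                (TensorProduct.map (ΔC ∘ₗ αC) αM), ← TensorProduct.map_comp,
                LinearMap.comp_assoc αC αC ΔC]
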